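/- There exists K such that for every integer k ≥ K and every integer i with 0 ≤ i < (log k)² − log k one has (1/2)·i! < k^{i+1} · ∫_0^{(log k)²/k} x^i e^{−k x} dx < (3/2)·i!. -/

import Mathlib

open Real MeasureTheory Set

lemma ig_integrableOn (i : ℕ) {T : ℝ} (hT : 0 ≤ T) :
    IntegrableOn (fun y : ℝ => y ^ i * Real.exp (-y)) (Ioi T) := by
  have h := Real.GammaIntegral_convergent (s := (i : ℝ) + 1) (by positivity)
  have h2 : IntegrableOn (fun y : ℝ => y ^ i * Real.exp (-y)) (Ioi 0) := by
    refine (h.congr_fun (fun x hx => ?_) measurableSet_Ioi)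
    rw [add_sub_cancel_right]; beta_reduce; rw [Real.rpow_natCast]
    ring
  exact h2.mono_set (Ioi_subset_Ioi hT)

lemma ig_tail_le (i : ℕ) {T : ℝ} (hT : 0 < T) (hiT : (i:ℝ) < T) :
    ∫ y in Ioi T, y ^ i * Real.exp (-y) ≤ T ^ i * Real.exp (-T) * (T / (T - i)) := by
  set a : ℝ := 1 - i / T with ha_def
  have ha : 0 < a := by
    have : (i:ℝ) / T < 1 := (div_lt_one hT).2 hiT
    simp only [ha_def]; linarith
  set C : ℝ := T ^ i * Real.exp (-T) * Real.exp (a * T) with hC_def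
  have hpt : ∀ y ∈ Ioi T, y ^ i * Real.exp (-y) ≤ C * Real.exp (-(a * y)) := by
    intro y hy
    have hyT : T < y := hy
    have hy0 : 0 < y := hT.trans hyT
    have h1 : y / T ≤ Real.exp (y / T - 1) := by
      have := Real.add_one_le_exp (y / T - 1)
      linarith
    have h2 : (y / T) ^ i ≤ Real.exp ((i : ℝ) * (y / T - 1)) := by
      calc (y / T) ^ i ≤ (Real.exp (y / T - 1)) ^ i :=
            pow_le_pow_left₀ (by positivity) h1 i
        _ = Real.exp ((i : ℝ) * (y / T - 1)) := by rw [← Real.exp_nat_mul]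
    have hyi : y ^ i = T ^ i * (y / T) ^ i := by
      rw [div_pow]; field_simp
    have hexp : Real.exp (-T) * Real.exp (a * T) * Real.exp (-(a * y))
        = Real.exp ((i : ℝ) * (y / T - 1)) * Real.exp (-y) := by
      rw [← Real.exp_add, ← Real.exp_add, ← Real.exp_add]
      congr 1
      rw [ha_def]
      field_simp
      ring
    calc y ^ i * Real.exp (-y)
        = T ^ i * ((y / T) ^ i * Real.exp (-y)) := by rw [hyi]; ring
      _ ≤ T ^ i * (Real.exp ((i : ℝ) * (y / T - 1)) * Real.exp (-y)) := by gcongr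
      _ = C * Real.exp (-(a * y)) := by rw [hC_def, mul_assoc, ← hexp]; ring
  have hmaj : IntegrableOn (fun y : ℝ => C * Real.exp (-(a * y))) (Ioi T) := by
    have := (exp_neg_integrableOn_Ioi T ha).const_mul C
    simpa [neg_mul, IntegrableOn] using this
  have hint := ig_integrableOn i hT.le
  have hle := MeasureTheory.setIntegral_mono_on hint hmaj measurableSet_Ioi hpt
  have hval : ∫ y in Ioi T, C * Real.exp (-(a * y)) = C * (a⁻¹ * Real.exp (-(a * T))) := by
    rw [MeasureTheory.integral_const_mul]
    congr 1
    have := MeasureTheory.integral_comp_mul_left_Ioi (fun u => Real.exp (-u)) T ha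
    simpa [smul_eq_mul, integral_exp_neg_Ioi, integral_exp_Iic] using this
  refine hle.trans ?_
  apply le_of_eq
  rw [hval, hC_def]
  have haT : a⁻¹ = T / (T - i) := by
    rw [ha_def]; field_simp
  rw [haT]
  calc T ^ i * rexp (-T) * rexp (a * T) * (T / (T - ↑i) * rexp (-(a * T)))
      = T ^ i * rexp (-T) * (T / (T - ↑i)) * (rexp (a * T) * rexp (-(a * T))) := by ring
    _ = T ^ i * rexp (-T) * (T / (T - ↑i)) := by
        rw [← Real.exp_add, add_neg_cancel, Real.exp_zero, mul_one]

lemma ig_total (i : ℕ) :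
    ∫ y in Ioi (0:ℝ), y ^ i * Real.exp (-y) = (Nat.factorial i : ℝ) := by
  have h := Real.Gamma_eq_integral (s := (i : ℝ) + 1) (by positivity)
  rw [Real.Gamma_nat_eq_factorial] at h
  rw [h]
  refine setIntegral_congr_fun measurableSet_Ioi (fun x hx => ?_)
  rw [add_sub_cancel_right, Real.rpow_natCast]
  ring

lemma ig_split (i : ℕ) {T : ℝ} (hT : 0 < T) :
    ∫ y in (0:ℝ)..T, y ^ i * Real.exp (-y)
      = (Nat.factorial i : ℝ) - ∫ y in Ioi T, y ^ i * Real.exp (-y) := by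
  have hu : Ioc (0:ℝ) T ∪ Ioi T = Ioi 0 := Ioc_union_Ioi_eq_Ioi hT.le
  have hd : Disjoint (Ioc (0:ℝ) T) (Ioi T) := Ioc_disjoint_Ioi le_rfl
  have h1 : IntegrableOn (fun y : ℝ => y ^ i * Real.exp (-y)) (Ioc 0 T) :=
    (ig_integrableOn i le_rfl).mono_set (by rw [← hu]; exact subset_union_left)
  have h2 := ig_integrableOn i hT.le
  have := MeasureTheory.setIntegral_union hd measurableSet_Ioi h1 h2
    (f := fun y : ℝ => y ^ i * Real.exp (-y)) (μ := volume)
  rw [hu, ig_total] at this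
  rw [intervalIntegral.integral_of_le hT.le]
  rw [MeasureTheory.integral_Ioc_eq_integral_Ioo] at this ⊢
  linarith

lemma ig_subst (i : ℕ) {b : ℝ} (hb : 0 < b) (T : ℝ) :
    b ^ (i + 1) * ∫ x in (0:ℝ)..(T / b), x ^ i * Real.exp (-b * x)
      = ∫ y in (0:ℝ)..T, y ^ i * Real.exp (-y) := by
  have h1 : ∀ x : ℝ, x ^ i * Real.exp (-b * x)
      = (b ^ i)⁻¹ * ((b * x) ^ i * Real.exp (-(b * x))) := by
    intro x
    rw [mul_pow, neg_mul]
    field_simp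
  rw [intervalIntegral.integral_congr (g := fun x => (b ^ i)⁻¹ * ((b * x) ^ i * Real.exp (-(b * x))))
      (fun x _ => h1 x)]
  rw [intervalIntegral.integral_const_mul]
  rw [intervalIntegral.integral_comp_mul_left (fun y => y ^ i * Real.exp (-y)) hb.ne']
  rw [mul_zero, mul_div_cancel₀ _ hb.ne', smul_eq_mul, pow_succ]
  field_simp

lemma stirling_lb (i : ℕ) (hi : 1 ≤ i) :
    Real.sqrt π * (Real.sqrt (2 * i) * ((i : ℝ) / Real.exp 1) ^ i)
      ≤ (Nat.factorial i : ℝ) := by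
  obtain ⟨n, rfl⟩ := Nat.exists_eq_add_of_le hi
  have hmono : √π ≤ Stirling.stirlingSeq (1 + n) := by
    have htend : Filter.Tendsto (fun m => Stirling.stirlingSeq (m + 1))
        Filter.atTop (nhds (√π)) :=
      Stirling.tendsto_stirlingSeq_sqrt_pi.comp (Filter.tendsto_add_atTop_nat 1)
    have := Stirling.stirlingSeq'_antitone.le_of_tendsto htend n
    simpa [Nat.add_comm] using this
  have hd : 0 < Real.sqrt (2 * (1 + n : ℕ)) * (((1 + n : ℕ) : ℝ) / Real.exp 1) ^ (1 + n) := by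
    have h1 : (0:ℝ) < ((1 + n : ℕ) : ℝ) := by positivity
    positivity
  rw [Stirling.stirlingSeq, le_div_iff₀ hd] at hmono
  exact hmono

lemma exponent_bound (i : ℕ) {T : ℝ} (hi : 1 ≤ i) (hiT : (i : ℝ) < T) :
    T ^ i * Real.exp (-T)
      ≤ ((i : ℝ) / Real.exp 1) ^ i * Real.exp (-(T - i) ^ 2 / (2 * T)) := by
  have hi0 : (0:ℝ) < i := by exact_mod_cast hi
  have hT : 0 < T := hi0.trans hiT
  have hu : 1 < T / i := (one_lt_div hi0).2 hiT
  have hlog : Real.log (T / i) < ((T / i) - (T / i)⁻¹) / 2 := by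
    have h0 : 0 < Real.log (T / i) := Real.log_pos hu
    have := Real.self_lt_sinh_iff.2 h0
    rwa [Real.sinh_eq, Real.exp_log (by positivity), Real.exp_neg,
      Real.exp_log (by positivity)] at this
  -- key exponent inequality
  have hkey : (i : ℝ) * Real.log (T / i) ≤ T - i - (T - i) ^ 2 / (2 * T) := by
    have h2 : (i : ℝ) * (((T / i) - (T / i)⁻¹) / 2) = T - i - (T - i) ^ 2 / (2 * T) := by
      field_simp
      ring
    nlinarith [hlog, hi0]
  have hTi : T ^ i = Real.exp ((i : ℝ) * Real.log T) := by
    rw [Real.exp_nat_mul, Real.exp_log hT]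
  have hii : ((i : ℝ) / Real.exp 1) ^ i = Real.exp ((i : ℝ) * (Real.log i - 1)) := by
    rw [Real.exp_nat_mul, Real.exp_sub, Real.exp_log hi0]
  rw [hTi, hii, ← Real.exp_add, ← Real.exp_add, Real.exp_le_exp]
  have hld : Real.log (T / i) = Real.log T - Real.log i :=
    Real.log_div hT.ne' (ne_of_gt hi0)
  rw [hld] at hkey
  have e1 : (i:ℝ) * (Real.log T - Real.log i) = i * Real.log T - i * Real.log i := by ring
  rw [e1] at hkey
  have e3 : (i:ℝ) * (Real.log i - 1) + -(T - i) ^ 2 / (2 * T)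
      = i * Real.log i - i - (T - i) ^ 2 / (2 * T) := by ring
  rw [e3]
  linarith



set_option maxHeartbeats 1000000 in
lemma tail_small (i : ℕ) {L : ℝ} (hL : 5 ≤ L) (hi : (i : ℝ) < L ^ 2 - L) :
    (L ^ 2) ^ i * Real.exp (-L ^ 2) * (L ^ 2 / (L ^ 2 - i))
      < (Nat.factorial i : ℝ) / 2 := by
  have hL0 : 0 < L := by linarith
  set T : ℝ := L ^ 2 with hT_def
  have hT25 : 25 ≤ T := by nlinarith
  have hT0 : 0 < T := by linarith
  have hiT : (i : ℝ) < T := by linarith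
  have hs : L < T - i := by linarith
  have hs0 : 0 < T - i := by linarith
  rcases Nat.eq_zero_or_pos i with h0 | hi1
  · subst h0
    simp only [pow_zero, Nat.cast_zero, sub_zero, Nat.factorial_zero, Nat.cast_one, one_mul]
    rw [div_self hT0.ne']
    have h1 : Real.exp (-T) ≤ Real.exp (-1) := Real.exp_le_exp.2 (by linarith)
    have h2 : Real.exp (-1) < 1 / 2 := by
      rw [Real.exp_neg]
      rw [inv_lt_comm₀ (Real.exp_pos 1) (by norm_num)]
      have := Real.exp_one_gt_d9
      norm_num at this ⊢
      linarith
    calc Real.exp (-T) * 1 = Real.exp (-T) := mul_one _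
      _ ≤ Real.exp (-1) := h1
      _ < 1 / 2 := h2
  · -- i ≥ 1
    have hi1' : (1:ℝ) ≤ i := by exact_mod_cast hi1
    set P : ℝ := ((i : ℝ) / Real.exp 1) ^ i with hP_def
    have hP : 0 < P := by
      have : (0:ℝ) < (i : ℝ) / Real.exp 1 := by positivity
      positivity
    have hEB := exponent_bound i hi1 hiT
    have hRpos : 0 < T / (T - i) := by positivity
    have hmain : (L ^ 2) ^ i * Real.exp (-L ^ 2) * (L ^ 2 / (L ^ 2 - i))
        ≤ P * Real.exp (-(T - i) ^ 2 / (2 * T)) * (T / (T - i)) := by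
      have := mul_le_mul_of_nonneg_right hEB hRpos.le
      simpa [hT_def] using this
    have h17 : (1.7 : ℝ) ≤ Real.sqrt π := by
      rw [Real.le_sqrt' (by norm_num)]
      nlinarith [Real.pi_gt_three]
    have hfact := stirling_lb i hi1
    rcases le_or_gt T (2 * i) with hA | hB
    · -- case A : T ≤ 2i
      have hsq : L ≤ Real.sqrt (2 * i) := by
        have : Real.sqrt T ≤ Real.sqrt (2 * i) := Real.sqrt_le_sqrt hA
        rwa [hT_def, Real.sqrt_sq hL0.le] at this
      have hfact2 : 1.7 * L * P ≤ (Nat.factorial i : ℝ) := by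
        have h1 : 1.7 * L * P ≤ Real.sqrt π * (Real.sqrt (2 * i) * P) := by
          have := mul_le_mul h17 (mul_le_mul_of_nonneg_right hsq hP.le) (by positivity)
            (Real.sqrt_nonneg π)
          linarith [this]
        exact h1.trans hfact
      have hE : Real.exp (-(T - i) ^ 2 / (2 * T)) ≤ 2 / 3 := by
        have h1 : (1:ℝ) / 2 ≤ (T - i) ^ 2 / (2 * T) := by
          rw [div_le_div_iff₀ (by norm_num) (by positivity)]
          nlinarith [hs, hL0]
        have h2 : Real.exp (-(T - i) ^ 2 / (2 * T)) ≤ Real.exp (-(1/2)) := by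
          apply Real.exp_le_exp.2
          have : -(T - i) ^ 2 / (2 * T) = -((T - i) ^ 2 / (2 * T)) := by ring
          rw [this]
          linarith
        refine h2.trans ?_
        rw [Real.exp_neg, inv_le_comm₀ (Real.exp_pos _) (by norm_num)]
        have := Real.add_one_le_exp (1/2 : ℝ)
        linarith
      have hR : T / (T - i) < L := by
        rw [div_lt_iff₀ hs0]
        nlinarith [hs, hL0]
      calc (L ^ 2) ^ i * Real.exp (-L ^ 2) * (L ^ 2 / (L ^ 2 - i))
          ≤ P * Real.exp (-(T - i) ^ 2 / (2 * T)) * (T / (T - i)) := hmain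
        _ < P * ((2/3) * L) := by
            have h3 : Real.exp (-(T - i) ^ 2 / (2 * T)) * (T / (T - i)) < (2/3) * L := by
              calc Real.exp (-(T - i) ^ 2 / (2 * T)) * (T / (T - i))
                  ≤ (2/3) * (T / (T - i)) := mul_le_mul_of_nonneg_right hE hRpos.le
                _ < (2/3) * L := by linarith
            calc P * Real.exp (-(T - i) ^ 2 / (2 * T)) * (T / (T - i))
                = P * (Real.exp (-(T - i) ^ 2 / (2 * T)) * (T / (T - i))) := by ring
              _ < P * ((2/3) * L) := by exact (mul_lt_mul_iff_right₀ hP).2 h3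
        _ < (Nat.factorial i : ℝ) / 2 := by nlinarith [hfact2, mul_pos hL0 hP]
    · -- case B : 2i < T
      have hsB : T / 2 < T - i := by linarith
      have hsq2 : (1.4 : ℝ) ≤ Real.sqrt (2 * i) := by
        rw [Real.le_sqrt' (by norm_num)]
        have : (1:ℝ) ≤ (i:ℝ) := hi1'
        nlinarith
      have hfact2 : 1.7 * 1.4 * P ≤ (Nat.factorial i : ℝ) := by
        have h1 : 1.7 * 1.4 * P ≤ Real.sqrt π * (Real.sqrt (2 * i) * P) := by
          have := mul_le_mul h17 (mul_le_mul_of_nonneg_right hsq2 hP.le) (by positivity)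
            (Real.sqrt_nonneg π)
          linarith [this]
        exact h1.trans hfact
      have hE : Real.exp (-(T - i) ^ 2 / (2 * T)) ≤ 1 / 3 := by
        have h1 : (2:ℝ) ≤ (T - i) ^ 2 / (2 * T) := by
          rw [le_div_iff₀ (by positivity)]
          nlinarith [hsB, hT25]
        have h2 : Real.exp (-(T - i) ^ 2 / (2 * T)) ≤ Real.exp (-2) := by
          apply Real.exp_le_exp.2
          have : -(T - i) ^ 2 / (2 * T) = -((T - i) ^ 2 / (2 * T)) := by ring
          rw [this]; linarith
        refine h2.trans ?_
        rw [Real.exp_neg, inv_le_comm₀ (Real.exp_pos _) (by norm_num)]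
        have := Real.add_one_le_exp (2 : ℝ)
        linarith
      have hR : T / (T - i) < 2 := by
        rw [div_lt_iff₀ hs0]; linarith
      calc (L ^ 2) ^ i * Real.exp (-L ^ 2) * (L ^ 2 / (L ^ 2 - i))
          ≤ P * Real.exp (-(T - i) ^ 2 / (2 * T)) * (T / (T - i)) := hmain
        _ < P * ((1/3) * 2) := by
            have h3 : Real.exp (-(T - i) ^ 2 / (2 * T)) * (T / (T - i)) < (1/3) * 2 := by
              calc Real.exp (-(T - i) ^ 2 / (2 * T)) * (T / (T - i))
                  ≤ (1/3) * (T / (T - i)) := mul_le_mul_of_nonneg_right hE hRpos.le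
                _ < (1/3) * 2 := by linarith
            calc P * Real.exp (-(T - i) ^ 2 / (2 * T)) * (T / (T - i))
                = P * (Real.exp (-(T - i) ^ 2 / (2 * T)) * (T / (T - i))) := by ring
              _ < P * ((1/3) * 2) := (mul_lt_mul_iff_right₀ hP).2 h3
        _ < (Nat.factorial i : ℝ) / 2 := by linarith [hfact2, hP]

set_option maxHeartbeats 1000000 in
/-- There exists `K` such that for every integer `k ≥ K` and every integer `i` with
`0 ≤ i < (log k)² − log k` one has
`(1/2)·i! < k^{i+1} · ∫_0^{(log k)²/k} x^i e^{−k x} dx < (3/2)·i!`. -/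
theorem incomplete_gamma_integral_factorial_bounds :
    ∃ K : ℕ, ∀ k : ℕ, K ≤ k → ∀ i : ℕ, (i : ℝ) < (Real.log k) ^ 2 - Real.log k →
      (1 / 2) * (Nat.factorial i : ℝ) <
          (k : ℝ) ^ (i + 1) *
            (∫ x in (0:ℝ)..((Real.log k) ^ 2 / k), x ^ i * Real.exp (-(k : ℝ) * x)) ∧
        (k : ℝ) ^ (i + 1) *
            (∫ x in (0:ℝ)..((Real.log k) ^ 2 / k), x ^ i * Real.exp (-(k : ℝ) * x)) <
          (3 / 2) * (Nat.factorial i : ℝ) := by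
  refine ⟨256, fun k hk i hi => ?_⟩
  have hk256 : (256 : ℝ) ≤ (k : ℝ) := by exact_mod_cast hk
  have hk0 : (0 : ℝ) < (k : ℝ) := by linarith
  set L : ℝ := Real.log k with hL_def
  have hL5 : 5 ≤ L := by
    have h1 : Real.log 256 ≤ Real.log k := Real.log_le_log (by norm_num) hk256
    have h2 : Real.log 256 = 8 * Real.log 2 := by
      rw [show (256 : ℝ) = 2 ^ 8 by norm_num, Real.log_pow]
      norm_num
    have h3 := Real.log_two_gt_d9
    rw [h2] at h1
    rw [hL_def]
    linarith
  have hL0 : 0 < L := by linarith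
  have hT0 : 0 < L ^ 2 := by positivity
  have hiT : (i : ℝ) < L ^ 2 := by linarith
  have hsub := ig_subst i hk0 (L ^ 2)
  have hsplit := ig_split i hT0
  have htail_nonneg : 0 ≤ ∫ y in Set.Ioi (L ^ 2), y ^ i * Real.exp (-y) := by
    refine MeasureTheory.setIntegral_nonneg measurableSet_Ioi (fun y hy => ?_)
    have hy0 : 0 < y := lt_trans hT0 hy
    positivity
  have htail_lt : (∫ y in Set.Ioi (L ^ 2), y ^ i * Real.exp (-y))
      < (Nat.factorial i : ℝ) / 2 :=
    (ig_tail_le i hT0 hiT).trans_lt (tail_small i hL5 hi)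
  have hfpos : (0 : ℝ) < (Nat.factorial i : ℝ) := by
    exact_mod_cast Nat.factorial_pos i
  have heq : (k : ℝ) ^ (i + 1) *
      (∫ x in (0:ℝ)..(L ^ 2 / k), x ^ i * Real.exp (-(k : ℝ) * x))
      = (Nat.factorial i : ℝ) - ∫ y in Set.Ioi (L ^ 2), y ^ i * Real.exp (-y) := by
    rw [hsub, hsplit]
  constructor
  · rw [heq]; linarith
  · rw [heq]; linarith
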